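/- Fix q ≥ 3 and l ∈ {1,...,q−1}, and let p₁,...,p_n be integers coprime to q. For each i let k_i be the unique residue mod q with p_i k_i ≡ l (mod q), and define p_i ∼ p_j iff cos(2π p_i k_j / q) = cos(2πl/q). Then ∼ is an equivalence relation on {p₁,...,p_n}. -/

import Mathlib

open Real

private lemma cos_key (q a b : ℕ) (hq : 0 < q) :
    Real.cos (2 * π * a / q) = Real.cos (2 * π * b / q) ↔
      ((a : ZMod q) = b ∨ (a : ZMod q) = -b) := by
  have hq0 : (q : ℝ) ≠ 0 := Nat.cast_ne_zero.mpr hq.ne'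
  have hpi : (2 * π : ℝ) ≠ 0 := by positivity
  constructor
  · intro h
    rw [Real.cos_eq_cos_iff] at h
    obtain ⟨m, hm | hm⟩ := h
    · left
      field_simp at hm
      have h3 : (2*π) * (b:ℝ) = (2*π) * ((m:ℝ)*q + a) := by linear_combination (2*π) * hm
      have h4 : (b : ℝ) = ((m*q + a : ℤ) : ℝ) := by
        push_cast; exact mul_left_cancel₀ hpi h3
      have hz : (b : ℤ) = (m * q + a : ℤ) := by exact_mod_cast h4
      have := congrArg (Int.cast : ℤ → ZMod q) hz
      push_cast at this
      simp [ZMod.natCast_self] at this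
      exact this.symm
    · right
      field_simp at hm
      have h3 : (2*π) * (b:ℝ) = (2*π) * ((m:ℝ)*q - a) := by linear_combination (2*π) * hm
      have h4 : (b : ℝ) = ((m*q - a : ℤ) : ℝ) := by
        push_cast; exact mul_left_cancel₀ hpi h3
      have hz : (b : ℤ) = (m * q - a : ℤ) := by exact_mod_cast h4
      have := congrArg (Int.cast : ℤ → ZMod q) hz
      push_cast at this
      simp [ZMod.natCast_self] at this
      linear_combination this
  · intro h
    rw [Real.cos_eq_cos_iff]
    obtain h | h := h
    · have hmod : a ≡ b [MOD q] := (ZMod.natCast_eq_natCast_iff _ _ _).mp h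
      obtain ⟨m, hm⟩ := (Nat.modEq_iff_dvd).mp hmod
      refine ⟨m, Or.inl ?_⟩
      have hr : (b : ℝ) - a = q * m := by exact_mod_cast hm
      field_simp
      linear_combination hr
    · have hz : ((a + b : ℕ) : ZMod q) = 0 := by push_cast; rw [h]; ring
      obtain ⟨m, hm⟩ := (ZMod.natCast_eq_zero_iff _ _).mp hz
      refine ⟨(m : ℤ), Or.inr ?_⟩
      have hr : (a : ℝ) + b = q * m := by exact_mod_cast hm
      field_simp
      linear_combination hr

/-- The relation `p_i ∼^{(l)} p_j` (given by `cos(2π p_i k_j/q) = cos(2πl/q)`,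
where `p_i k_i ≡ l (mod q)`) is an equivalence relation. -/
theorem sim_l_is_equivalence
    (n q l : ℕ) (hq : 3 ≤ q) (hl : 1 ≤ l ∧ l ≤ q - 1)
    (p k : Fin n → ℕ)
    (hcop : ∀ i, Nat.Coprime (p i) q)
    (hk : ∀ i, p i * k i ≡ l [MOD q]) :
    Equivalence (fun i j : Fin n =>
      Real.cos (2 * π * (p i * k j) / q) = Real.cos (2 * π * l / q)) := by
  have hq0 : 0 < q := by omega
  have hu : ∀ i, ∃ c : ZMod q, (p i : ZMod q) * c = 1 := by
    intro i
    exact ⟨((ZMod.unitOfCoprime (p i) (hcop i))⁻¹ : (ZMod q)ˣ), by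
      have := (ZMod.unitOfCoprime (p i) (hcop i)).mul_inv
      simpa [ZMod.coe_unitOfCoprime] using this⟩
  choose c hc using hu
  have hkz : ∀ i, (p i : ZMod q) * (k i : ZMod q) = (l : ZMod q) := by
    intro i
    have := (ZMod.natCast_eq_natCast_iff _ _ _).mpr (hk i)
    push_cast at this
    exact this
  have hkc : ∀ i, (k i : ZMod q) = c i * l := by
    intro i
    calc (k i : ZMod q) = (p i : ZMod q) * c i * k i := by rw [hc i]; ring
      _ = c i * ((p i : ZMod q) * k i) := by ring
      _ = c i * l := by rw [hkz i]
  have hrel : ∀ i j : Fin n,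
      (Real.cos (2 * π * (p i * k j) / q) = Real.cos (2 * π * l / q)) ↔
      ((p i : ZMod q) * c j * l = l ∨ (p i : ZMod q) * c j * l = -l) := by
    intro i j
    have hck := cos_key q (p i * k j) l hq0
    push_cast at hck
    rw [hck, hkc j]
    constructor
    · rintro (h | h)
      · left; linear_combination h
      · right; linear_combination h
    · rintro (h | h)
      · left; linear_combination h
      · right; linear_combination h
  constructor
  · intro i
    rw [hrel]
    left
    rw [hc i, one_mul]
  · intro i j h
    rw [hrel] at h ⊢
    have key : (p j : ZMod q) * c i * ((p i : ZMod q) * c j * l) = l := by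
      calc (p j : ZMod q) * c i * ((p i : ZMod q) * c j * l)
          = ((p i : ZMod q) * c i) * (((p j : ZMod q) * c j) * l) := by ring
        _ = l := by rw [hc i, hc j]; ring
    obtain h | h := h
    · left; rw [h] at key; exact key
    · right; rw [h] at key; linear_combination -key
  · intro i j m h1 h2
    rw [hrel] at h1 h2 ⊢
    have key : (p i : ZMod q) * c m * l = (p i : ZMod q) * c j * ((p j : ZMod q) * c m * l) := by
      calc (p i : ZMod q) * c m * l
          = ((p j : ZMod q) * c j) * ((p i : ZMod q) * c m * l) := by rw [hc j]; ring
        _ = (p i : ZMod q) * c j * ((p j : ZMod q) * c m * l) := by ring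
    obtain h1 | h1 := h1 <;> obtain h2 | h2 := h2 <;> rw [h2] at key
    · left; rw [key]; linear_combination h1
    · right; rw [key]; linear_combination -h1
    · right; rw [key]; linear_combination h1
    · left; rw [key]; linear_combination -h1
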